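/- Let D(0) be the output of a function applied to T i.i.d. randomized-response bits RR_ε(0), and D(1) the output of the same function applied to the randomized responses of a stream with a single 1 placed at a uniformly random position among T slots (other entries 0). Then there is a randomized post-processing function h on {0,...,T} such that D(0) = h(Bin(T, 1/(e^ε+1))) and D(1) = h(Bin(T-1, 1/(e^ε+1)) + Bern(e^ε/(e^ε+1))) in distribution; consequently TV(D(0), D(1)) ≤ TV(Bin(T, 1/(e^ε+1)), Bin(T-1, 1/(e^ε+1)) + Bern(e^ε/(e^ε+1))). -/

import Mathlib

open Real

/-- The `ε`-randomized response mechanism on a bit. -/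
noncomputable def rrPMF (ε : ℝ) (b y : Bool) : ℝ :=
  if y = b then exp ε / (1 + exp ε) else 1 / (1 + exp ε)

/-- PMF of the binomial distribution `Bin(T, p)` at `k`. -/
noncomputable def binomPMF (T : ℕ) (p : ℝ) (k : ℕ) : ℝ :=
  (T.choose k : ℝ) * p ^ k * (1 - p) ^ (T - k)

/-- PMF of the independent sum `Bin(T-1, p) + Bern(q)` at `k`. -/
noncomputable def binBernConvPMF (T : ℕ) (p q : ℝ) (k : ℕ) : ℝ :=
  (1 - q) * binomPMF (T - 1) p k +
    q * (if k = 0 then 0 else binomPMF (T - 1) p (k - 1))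

/-- Total variation distance between two distributions on a finite type. -/
noncomputable def tvFin {O : Type} [Fintype O] (f g : O → ℝ) : ℝ :=
  (1 / 2) * ∑ o, |f o - g o|

open Finset

def cnt {T : ℕ} (b : Fin T → Bool) : ℕ := #(filter (fun t => b t = true) univ)

lemma cnt_le {T : ℕ} (b : Fin T → Bool) : cnt b ≤ T := by
  have := Finset.card_filter_le (univ : Finset (Fin T)) (fun t => b t = true)
  rwa [Finset.card_fin] at this

lemma fibercard (T m : ℕ) :
    #(filter (fun b : Fin T → Bool => cnt b = m) univ) = T.choose m := by
  have hp : #(powersetCard m (univ : Finset (Fin T))) = T.choose m := by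
    rw [Finset.card_powersetCard, Finset.card_fin]
  rw [← hp]
  refine Finset.card_bij' (fun b _ => filter (fun t => b t = true) univ)
    (fun s _ => fun t => decide (t ∈ s)) ?_ ?_ ?_ ?_
  · intro b hb
    simp only [mem_filter, mem_univ, true_and, cnt] at hb
    simpa [Finset.mem_powersetCard, cnt] using (Finset.mem_filter.mp hb).2
  · intro s hs
    simp only [Finset.mem_powersetCard] at hs
    simp only [mem_filter, mem_univ, true_and, cnt]
    simp [cnt, ← hs.2]
  · intro b hb; funext t; simp
  · intro s hs; ext t; simp

lemma prod_rr_false (T : ℕ) (ε : ℝ) (b : Fin T → Bool) :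
    ∏ t, rrPMF ε false (b t)
      = (1/(exp ε + 1)) ^ cnt b * (exp ε/(exp ε + 1)) ^ (T - cnt b) := by
  have hcc : #(filter (fun t => ¬ b t = true) univ) = T - cnt b := by
    have h := Finset.card_filter_add_card_filter_not
      (s := (univ : Finset (Fin T))) (p := fun t => b t = true)
    rw [Finset.card_fin] at h
    unfold cnt; omega
  rw [← Finset.prod_filter_mul_prod_filter_not univ (fun t => b t = true)]
  have h1 : ∏ t ∈ filter (fun t => b t = true) univ, rrPMF ε false (b t)
      = (1/(exp ε + 1)) ^ cnt b := by
    rw [Finset.prod_eq_pow_card (b := 1/(exp ε + 1))]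
    · rfl
    · intro t ht
      rw [mem_filter] at ht
      simp [rrPMF, ht.2, add_comm]
  have h2 : ∏ t ∈ filter (fun t => ¬ b t = true) univ, rrPMF ε false (b t)
      = (exp ε/(exp ε + 1)) ^ (T - cnt b) := by
    rw [Finset.prod_eq_pow_card (b := exp ε/(exp ε + 1))]
    · rw [hcc]
    · intro t ht
      rw [mem_filter] at ht
      have : b t = false := by simp at ht; exact ht
      simp [rrPMF, this, add_comm]
  rw [h1, h2]

lemma prod_rr_one (T : ℕ) (ε : ℝ) (t0 : Fin T) (b : Fin T → Bool) :
    ∏ t, rrPMF ε (if t = t0 then true else false) (b t)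
      = (if b t0 = true then exp ε else (exp ε)⁻¹) * ∏ t, rrPMF ε false (b t) := by
  have hE : exp ε ≠ 0 := (exp_pos ε).ne'
  have hA : (1:ℝ) + exp ε ≠ 0 := by positivity
  rw [← Finset.mul_prod_erase univ
      (fun t => rrPMF ε (if t = t0 then true else false) (b t)) (mem_univ t0),
    ← Finset.mul_prod_erase univ (fun t => rrPMF ε false (b t)) (mem_univ t0)]
  have hrest : ∏ t ∈ univ.erase t0, rrPMF ε (if t = t0 then true else false) (b t)
      = ∏ t ∈ univ.erase t0, rrPMF ε false (b t) :=
    Finset.prod_congr rfl fun t ht => by rw [if_neg (Finset.mem_erase.mp ht).1]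
  rw [hrest]
  have hsingle : rrPMF ε (if t0 = t0 then true else false) (b t0)
      = (if b t0 = true then exp ε else (exp ε)⁻¹) * rrPMF ε false (b t0) := by
    rw [if_pos rfl]
    cases hb : b t0 <;> simp [rrPMF] <;> field_simp
  rw [hsingle]; ring

lemma sum_rr_ratio (T : ℕ) (ε : ℝ) (b : Fin T → Bool) :
    ∑ t0, (if b t0 = true then exp ε else (exp ε)⁻¹)
      = (cnt b : ℝ) * exp ε + ((T - cnt b : ℕ):ℝ) * (exp ε)⁻¹ := by
  have hcc : #(filter (fun t => ¬ b t = true) univ) = T - cnt b := by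
    have h := Finset.card_filter_add_card_filter_not
      (s := (univ : Finset (Fin T))) (p := fun t => b t = true)
    rw [Finset.card_fin] at h
    unfold cnt; omega
  rw [Finset.sum_ite, Finset.sum_const, Finset.sum_const, hcc]
  simp [nsmul_eq_mul, cnt]
lemma nat1 (T m : ℕ) (hT : 1 ≤ T) (hm : 1 ≤ m) :
    T * (T-1).choose (m-1) = m * T.choose m := by
  obtain ⟨t, rfl⟩ := Nat.exists_eq_add_of_le hT
  obtain ⟨k, rfl⟩ := Nat.exists_eq_add_of_le hm
  have h := Nat.add_one_mul_choose_eq t k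
  simp only [add_comm 1, Nat.add_sub_cancel]
  rw [h]; ring

lemma nat2 (T m : ℕ) (hT : 1 ≤ T) :
    T * (T-1).choose m = (T - m) * T.choose m := by
  obtain ⟨t, rfl⟩ := Nat.exists_eq_add_of_le hT
  have h := Nat.add_one_mul_choose_eq t m
  simp only [add_comm 1, Nat.add_sub_cancel]
  rw [h, Nat.choose_succ_right_eq]; ring

lemma convIdentity (T : ℕ) (hT : 1 ≤ T) (ε : ℝ) (m : ℕ) (hm : m ≤ T) :
    binBernConvPMF T (1/(exp ε + 1)) (exp ε/(exp ε + 1)) m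
      = (1/(T:ℝ)) * binomPMF T (1/(exp ε + 1)) m
        * ((m:ℝ) * exp ε + ((T - m : ℕ):ℝ) * (exp ε)⁻¹) := by
  have hE : (0:ℝ) < exp ε := exp_pos ε
  set E := exp ε with hEdef
  have hA : (0:ℝ) < E + 1 := by linarith
  have hA' : E + 1 ≠ 0 := ne_of_gt hA
  have hE' : E ≠ 0 := ne_of_gt hE
  have hT0 : (T:ℝ) ≠ 0 := by positivity -- maybe fails
  have eq2 : (E/(E+1)) * (if m = 0 then 0 else binomPMF (T-1) (1/(E+1)) (m-1))
      = (1/(T:ℝ)) * binomPMF T (1/(E+1)) m * ((m:ℝ) * E) := by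
    rcases Nat.eq_zero_or_pos m with h0 | h0
    · subst h0; simp
    · obtain ⟨k, rfl⟩ : ∃ k, m = k + 1 := ⟨m-1, by omega⟩
      rw [if_neg (by omega)]
      have key : ((T:ℝ)) * (((T-1).choose k):ℝ) = ((k:ℝ)+1)*((T.choose (k+1)):ℝ) := by
        have := nat1 T (k+1) hT (by omega)
        simp only [Nat.add_sub_cancel] at this
        exact_mod_cast this
      have e1 : (T-1) - ((k+1)-1) = T - (k+1) := by omega
      unfold binomPMF
      rw [e1]
      simp only [Nat.add_sub_cancel, pow_succ]
      field_simp
      push_cast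
      linear_combination key
  have hc : ((T - m : ℕ):ℝ) = (T:ℝ) - (m:ℝ) := by
    exact Nat.cast_sub hm
  have eq1 : (1 - E/(E+1)) * binomPMF (T-1) (1/(E+1)) m
      = (1/(T:ℝ)) * binomPMF T (1/(E+1)) m * (((T:ℝ) - (m:ℝ)) * E⁻¹) := by
    rcases eq_or_lt_of_le hm with rfl | hlt
    · simp [binomPMF, Nat.choose_eq_zero_of_lt (show m - 1 < m by omega)]
    · have key : ((T:ℝ)) * (((T-1).choose m):ℝ) = ((T:ℝ) - (m:ℝ))*((T.choose m):ℝ) := by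
        rw [← hc]; exact_mod_cast nat2 T m hT
      have e1 : T - m = ((T-1) - m) + 1 := by omega
      unfold binomPMF
      rw [e1, pow_succ]
      field_simp
      linear_combination E * key
  unfold binBernConvPMF
  rw [hc]
  linear_combination eq1 + eq2

/-- Let `D(0)` be a randomized function `f` applied to the `T` i.i.d. randomized
responses of the all-zeros stream, and `D(1)` the same function applied to the
randomized responses of a stream with a single `1` at a uniformly random position.
Then both are post-processings `h` of the count of ones, distributed as
`Bin(T, 1/(e^ε+1))` resp. `Bin(T-1, 1/(e^ε+1)) + Bern(e^ε/(e^ε+1))`, and hence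
`TV(D(0), D(1))` is at most the TV distance between those two count distributions. -/
theorem stmt13 {O : Type} [Fintype O] (T : ℕ) (hT : 1 ≤ T) (ε : ℝ) (hε : 0 < ε)
    (f : (Fin T → Bool) → O → ℝ)
    (hf0 : ∀ b o, 0 ≤ f b o) (hf1 : ∀ b, ∑ o, f b o = 1) :
    let q : ℝ := 1 / (exp ε + 1)
    let D0 : O → ℝ := fun o =>
      ∑ b : Fin T → Bool, (∏ t : Fin T, rrPMF ε false (b t)) * f b o
    let D1 : O → ℝ := fun o =>
      (1 / (T : ℝ)) * ∑ t0 : Fin T, ∑ b : Fin T → Bool,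
        (∏ t : Fin T, rrPMF ε (if t = t0 then true else false) (b t)) * f b o
    ∃ h : ℕ → O → ℝ,
      (∀ m o, 0 ≤ h m o) ∧ (∀ m, ∑ o, h m o = 1) ∧
        (∀ o, D0 o = ∑ m ∈ Finset.range (T + 1), binomPMF T q m * h m o) ∧
        (∀ o, D1 o = ∑ m ∈ Finset.range (T + 1),
          binBernConvPMF T q (exp ε / (exp ε + 1)) m * h m o) ∧
        tvFin D0 D1 ≤ (1 / 2) * ∑ m ∈ Finset.range (T + 1),
          |binomPMF T q m - binBernConvPMF T q (exp ε / (exp ε + 1)) m| := by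
  intro q D0 D1
  have hE : (0:ℝ) < exp ε := exp_pos ε
  have hA : (0:ℝ) < exp ε + 1 := by linarith
  have hqdef : q = 1 / (exp ε + 1) := rfl
  have hq1 : 1 - q = exp ε / (exp ε + 1) := by rw [hqdef]; field_simp; ring
  set S : ℕ → O → ℝ :=
    fun m o => ∑ b ∈ filter (fun b : Fin T → Bool => cnt b = m) univ, f b o with hS
  set h : ℕ → O → ℝ :=
    fun m o => if m ≤ T then ((T.choose m : ℝ))⁻¹ * S m o else f (fun _ => false) o
    with hh
  have hchoose : ∀ m, m ≤ T → ((T.choose m : ℝ)) ≠ 0 :=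
    fun m hm => Nat.cast_ne_zero.mpr (Nat.choose_pos hm).ne'
  have hSsum : ∀ m, ∑ o, S m o = (T.choose m : ℝ) := by
    intro m
    rw [hS]
    rw [Finset.sum_comm]
    rw [Finset.sum_congr rfl fun b _ => hf1 b, Finset.sum_const, fibercard]
    simp
  have hnn : ∀ m o, 0 ≤ h m o := by
    intro m o
    simp only [hh]
    by_cases hm : m ≤ T
    · rw [if_pos hm]
      exact mul_nonneg (by positivity) (Finset.sum_nonneg fun b _ => hf0 b o)
    · rw [if_neg hm]; exact hf0 _ o
  have hsum1 : ∀ m, ∑ o, h m o = 1 := by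
    intro m
    simp only [hh]
    by_cases hm : m ≤ T
    · simp only [if_pos hm]
      rw [← Finset.mul_sum, hSsum, inv_mul_cancel₀ (hchoose m hm)]
    · simp only [if_neg hm]
      exact hf1 _
  -- fiberwise decomposition
  have hfiber : ∀ g : (Fin T → Bool) → ℝ,
      ∑ b, g b = ∑ m ∈ Finset.range (T + 1),
        ∑ b ∈ filter (fun b : Fin T → Bool => cnt b = m) univ, g b := by
    intro g
    exact (Finset.sum_fiberwise_of_maps_to
      (fun b _ => Finset.mem_range.mpr (Nat.lt_succ_of_le (cnt_le b))) g).symm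
  have hbh : ∀ m, m ≤ T → ∀ o,
      binomPMF T q m * h m o = q ^ m * (1 - q) ^ (T - m) * S m o := by
    intro m hm o
    simp only [hh, if_pos hm]
    unfold binomPMF
    field_simp [hchoose m hm]
  have hD0 : ∀ o, D0 o = ∑ m ∈ Finset.range (T + 1), binomPMF T q m * h m o := by
    intro o
    show ∑ b : Fin T → Bool, (∏ t : Fin T, rrPMF ε false (b t)) * f b o = _
    rw [hfiber]
    refine Finset.sum_congr rfl fun m hm => ?_
    have hm' : m ≤ T := Nat.lt_succ_iff.mp (Finset.mem_range.mp hm)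
    rw [hbh m hm' o, hS, Finset.mul_sum]
    refine Finset.sum_congr rfl fun b hb => ?_
    have hcb : cnt b = m := (Finset.mem_filter.mp hb).2
    rw [prod_rr_false, hcb, ← hqdef, ← hq1, mul_assoc]
  have hD1 : ∀ o, D1 o = ∑ m ∈ Finset.range (T + 1),
      binBernConvPMF T q (exp ε / (exp ε + 1)) m * h m o := by
    intro o
    show (1 / (T : ℝ)) * ∑ t0 : Fin T, ∑ b : Fin T → Bool,
        (∏ t : Fin T, rrPMF ε (if t = t0 then true else false) (b t)) * f b o = _
    have step : ∑ t0 : Fin T, ∑ b : Fin T → Bool,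
        (∏ t : Fin T, rrPMF ε (if t = t0 then true else false) (b t)) * f b o
        = ∑ b : Fin T → Bool, ((cnt b : ℝ) * exp ε + ((T - cnt b : ℕ):ℝ) * (exp ε)⁻¹)
            * ((∏ t, rrPMF ε false (b t)) * f b o) := by
      rw [Finset.sum_comm]
      refine Finset.sum_congr rfl fun b _ => ?_
      rw [← sum_rr_ratio T ε b, Finset.sum_mul]
      refine Finset.sum_congr rfl fun t0 _ => ?_
      rw [prod_rr_one, mul_assoc]
    rw [step, hfiber, Finset.mul_sum]
    refine Finset.sum_congr rfl fun m hm => ?_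
    have hm' : m ≤ T := Nat.lt_succ_iff.mp (Finset.mem_range.mp hm)
    have hconv := convIdentity T hT ε m hm'
    rw [← hqdef] at hconv
    have hinner : ∑ b ∈ filter (fun b : Fin T → Bool => cnt b = m) univ,
        ((cnt b : ℝ) * exp ε + ((T - cnt b : ℕ):ℝ) * (exp ε)⁻¹)
          * ((∏ t, rrPMF ε false (b t)) * f b o)
        = ((m : ℝ) * exp ε + ((T - m : ℕ):ℝ) * (exp ε)⁻¹)
          * (q ^ m * (1 - q) ^ (T - m) * S m o) := by
      simp only [hS, Finset.mul_sum]
      refine Finset.sum_congr rfl fun b hb => ?_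
      have hcb : cnt b = m := (Finset.mem_filter.mp hb).2
      rw [prod_rr_false, hcb, ← hqdef, ← hq1]
    rw [hinner, hconv]
    linear_combination (-(1/(T:ℝ)) * ((m:ℝ) * exp ε + ((T - m : ℕ):ℝ) * (exp ε)⁻¹)) * hbh m hm' o
  refine ⟨h, hnn, hsum1, hD0, hD1, ?_⟩
  have hbd : ∀ o, |D0 o - D1 o| ≤ ∑ m ∈ Finset.range (T + 1),
      |binomPMF T q m - binBernConvPMF T q (exp ε / (exp ε + 1)) m| * h m o := by
    intro o
    rw [hD0 o, hD1 o, ← Finset.sum_sub_distrib]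
    refine (Finset.abs_sum_le_sum_abs _ _).trans ?_
    refine Finset.sum_le_sum fun m _ => ?_
    rw [← sub_mul, abs_mul, abs_of_nonneg (hnn m o)]
  rw [tvFin]
  calc (1/2) * ∑ o, |D0 o - D1 o|
      ≤ (1/2) * ∑ o, ∑ m ∈ Finset.range (T + 1),
          |binomPMF T q m - binBernConvPMF T q (exp ε / (exp ε + 1)) m| * h m o := by
        exact mul_le_mul_of_nonneg_left (Finset.sum_le_sum fun o _ => hbd o) (by norm_num)
    _ = (1/2) * ∑ m ∈ Finset.range (T + 1),
          |binomPMF T q m - binBernConvPMF T q (exp ε / (exp ε + 1)) m| := by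
        rw [Finset.sum_comm]
        congr 1
        refine Finset.sum_congr rfl fun m _ => ?_
        rw [← Finset.mul_sum, hsum1 m, mul_one]
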